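/- Let p be a quadratic polynomial with cell averages f_{i−1}, f_i over intervals of length Δx centered at x_i − Δx and x_i and with derivative cell average h_i over the interval centered at x_i (the small-stencil polynomial p_1). Then its Jiang–Shu smoothness indicator on I_i = [x_i − Δx/2, x_i + Δx/2], β = ∫_{I_i}(Δx (p')^2 + Δx^3 (p'')^2) dx, equals (Δx h_i)^2 + (13/3)(Δx h_i − f_i + f_{i−1})^2. -/

import Mathlib

open intervalIntegral

lemma quadInt (a b c s t : ℝ) :
    ∫ x in s..t, (a + b * x + c * x ^ 2) =
      (a * t + b * t ^ 2 / 2 + c * t ^ 3 / 3) - (a * s + b * s ^ 2 / 2 + c * s ^ 3 / 3) := by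
  apply intervalIntegral.integral_eq_sub_of_hasDerivAt
  · intro x _
    have h := ((hasDerivAt_id x).const_mul a).add
      ((((hasDerivAt_pow 2 x).const_mul b).div_const 2).add
        (((hasDerivAt_pow 3 x).const_mul c).div_const 3))
    convert h using 1
    · funext y; simp; ring
    · push_cast; ring
  · exact ((continuous_const.add (continuous_const.mul continuous_id)).add
      (continuous_const.mul (continuous_pow 2))).intervalIntegrable _ _

theorem stmt_15 (Δx xi fim1 fi hi : ℝ) (hΔ : 0 < Δx)
    (p : Polynomial ℝ) (hdeg : p.natDegree ≤ 2)
    (h1 : (1 / Δx) * ∫ x in ((xi - Δx) - Δx / 2)..((xi - Δx) + Δx / 2), p.eval x = fim1)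
    (h2 : (1 / Δx) * ∫ x in (xi - Δx / 2)..(xi + Δx / 2), p.eval x = fi)
    (h3 : (1 / Δx) * ∫ x in (xi - Δx / 2)..(xi + Δx / 2), (Polynomial.derivative p).eval x = hi) :
    (∫ x in (xi - Δx / 2)..(xi + Δx / 2),
        (Δx * ((Polynomial.derivative p).eval x) ^ 2
          + Δx ^ 3 * ((Polynomial.derivative (Polynomial.derivative p)).eval x) ^ 2))
      = (Δx * hi) ^ 2 + (13 / 3) * (Δx * hi - fi + fim1) ^ 2 := by
  set a := p.coeff 0 with ha
  set b := p.coeff 1 with hb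
  set c := p.coeff 2 with hc
  have hc3 : p.coeff 3 = 0 := p.coeff_eq_zero_of_natDegree_lt (by omega)
  have hp : ∀ x : ℝ, p.eval x = a + b * x + c * x ^ 2 := by
    intro x
    rw [Polynomial.eval_eq_sum_range' (Nat.lt_succ_of_le hdeg)]
    simp [Finset.sum_range_succ]; rfl
  have hdeg1 : (Polynomial.derivative p).natDegree ≤ 2 :=
    le_trans (Polynomial.natDegree_derivative_le p) (by omega)
  have e0 : (Polynomial.derivative p).coeff 0 = b := by
    simp [Polynomial.coeff_derivative]; rfl
  have e1 : (Polynomial.derivative p).coeff 1 = 2 * c := by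
    rw [Polynomial.coeff_derivative]; push_cast; ring
  have e2 : (Polynomial.derivative p).coeff 2 = 0 := by
    rw [Polynomial.coeff_derivative, hc3]; ring
  have hd1 : ∀ x : ℝ, (Polynomial.derivative p).eval x = b + 2 * c * x := by
    intro x
    rw [Polynomial.eval_eq_sum_range' (Nat.lt_succ_of_le hdeg1)]
    rw [Finset.sum_range_succ, Finset.sum_range_succ, Finset.sum_range_succ,
      Finset.sum_range_zero, e0, e1, e2]
    ring
  have hdeg2 : (Polynomial.derivative (Polynomial.derivative p)).natDegree ≤ 2 :=
    le_trans (Polynomial.natDegree_derivative_le _) (by omega)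
  have e3 : (Polynomial.derivative p).coeff 3 = 0 := by
    rw [Polynomial.coeff_derivative,
      p.coeff_eq_zero_of_natDegree_lt (by omega : p.natDegree < 4)]; ring
  have f0 : (Polynomial.derivative (Polynomial.derivative p)).coeff 0 = 2 * c := by
    rw [Polynomial.coeff_derivative, e1]; push_cast; ring
  have f1 : (Polynomial.derivative (Polynomial.derivative p)).coeff 1 = 0 := by
    rw [Polynomial.coeff_derivative, e2]; ring
  have f2 : (Polynomial.derivative (Polynomial.derivative p)).coeff 2 = 0 := by
    rw [Polynomial.coeff_derivative, e3]; ring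
  have hd2 : ∀ x : ℝ, (Polynomial.derivative (Polynomial.derivative p)).eval x = 2 * c := by
    intro x
    rw [Polynomial.eval_eq_sum_range' (Nat.lt_succ_of_le hdeg2)]
    rw [Finset.sum_range_succ, Finset.sum_range_succ, Finset.sum_range_succ,
      Finset.sum_range_zero, f0, f1, f2]
    ring
  have hΔ' : Δx ≠ 0 := ne_of_gt hΔ
  simp only [hp] at h1 h2
  simp only [hd1] at h3
  rw [quadInt] at h1 h2
  have h3' : (1 / Δx) * ∫ x in (xi - Δx / 2)..(xi + Δx / 2), (b + (2 * c) * x + 0 * x ^ 2) = hi := by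
    rw [← h3]
    congr 1
    apply intervalIntegral.integral_congr
    intro x _
    ring
  rw [quadInt] at h3'
  have key : (∫ x in (xi - Δx / 2)..(xi + Δx / 2),
        (Δx * ((Polynomial.derivative p).eval x) ^ 2
          + Δx ^ 3 * ((Polynomial.derivative (Polynomial.derivative p)).eval x) ^ 2))
      = ∫ x in (xi - Δx / 2)..(xi + Δx / 2),
          ((Δx * b ^ 2 + Δx ^ 3 * (4 * c ^ 2)) + (Δx * (4 * b * c)) * x
            + (Δx * (4 * c ^ 2)) * x ^ 2) := by
    apply intervalIntegral.integral_congr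
    intro x _
    simp only [hd1, hd2]
    ring
  rw [key, quadInt]
  subst h1 h2 h3'
  field_simp
  ring
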